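/- For every odd integer j ≥ 3: the continued fraction [0; (2^j − 2)/3, 1, 2] equals 3/2^j and the continued fraction [0; (7·2^j − 2)/3, 1, 2] equals 3/(7·2^j); the first nontrivial partial quotients are congruent, (2^j − 2)/3 ≡ (7·2^j − 2)/3 (mod 2^{j+1}); yet the Kronecker symbols differ: (3/2^j) = −1 while (3/(7·2^j)) = 1. Hence the Kronecker symbol of a convergent is not determined by the residue classes of the partial quotients modulo any fixed power of 2. -/

import Mathlib

/-- The Kronecker symbol `(s/t)` for a natural denominator `t`: writing `t = 2^j * t'`
with `t'` odd, `(s/t) = (s/2)^j * (s/t')`, where `(s/t')` is the Jacobi symbol and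
`(s/2) = 1` if `s ≡ ±1 (mod 8)`, `(s/2) = -1` if `s ≡ ±3 (mod 8)` (and `0` for even `s`). -/
def kron (s : ℤ) (t : ℕ) : ℤ :=
  (if s % 8 = 1 ∨ s % 8 = 7 then 1
   else if s % 8 = 3 ∨ s % 8 = 5 then -1 else 0) ^ padicValNat 2 t
    * jacobiSym s (t / 2 ^ padicValNat 2 t)

/-- For odd `j ≥ 3`: with `A = (2^j - 2)/3` and `B = (7·2^j - 2)/3` (positive integers),
`[0; A, 1, 2] = 3/2^j` and `[0; B, 1, 2] = 3/(7·2^j)`, `A ≡ B (mod 2^(j+1))`, yet the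
Kronecker symbols differ: `(3/2^j) = -1` while `(3/(7·2^j)) = 1`. -/
theorem kronecker_not_determined_by_partial_quotients
    (j : ℕ) (hj : 3 ≤ j) (hj_odd : Odd j) :
    ∃ A B : ℤ, 0 < A ∧ 0 < B ∧ 3 * A = 2 ^ j - 2 ∧ 3 * B = 7 * 2 ^ j - 2 ∧
      A ≡ B [ZMOD 2 ^ (j + 1)] ∧
      (0 : ℚ) + 1 / ((A : ℚ) + 1 / (1 + 1 / 2)) = 3 / 2 ^ j ∧
      (0 : ℚ) + 1 / ((B : ℚ) + 1 / (1 + 1 / 2)) = 3 / (7 * 2 ^ j) ∧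
      kron 3 (2 ^ j) = -1 ∧ kron 3 (7 * 2 ^ j) = 1 ∧
      kron 3 (2 ^ j) ≠ kron 3 (7 * 2 ^ j) := by
  obtain ⟨k, hk⟩ := hj_odd
  -- divisibility: 3 ∣ 2^j - 2
  have hdvd : (3 : ℤ) ∣ 2 ^ j - 2 := by
    subst hk
    have h4 : (3 : ℤ) ∣ 4 ^ k - 1 := by
      have h : (4 : ℤ) ^ k ≡ 1 [ZMOD 3] := by
        simpa using Int.ModEq.pow k (show (4:ℤ) ≡ 1 [ZMOD 3] by decide)
      exact h.symm.dvd
    obtain ⟨c, hc⟩ := h4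
    exact ⟨2 * c, by rw [pow_succ, pow_mul]; push_cast; linarith⟩
  obtain ⟨A, hA⟩ := hdvd
  have hB3 : 7 * (2:ℤ) ^ j - 2 = 3 * (2 * 2 ^ j + A) := by linarith
  set B : ℤ := 2 * 2 ^ j + A with hBdef
  have hB : 7 * (2:ℤ) ^ j - 2 = 3 * B := hB3
  have h2j : (8 : ℤ) ≤ 2 ^ j := by
    calc (8 : ℤ) = 2 ^ 3 := by norm_num
    _ ≤ 2 ^ j := pow_le_pow_right₀ (by norm_num) hj
  have hkron1 : kron 3 (2 ^ j) = -1 := by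
    unfold kron
    rw [padicValNat.prime_pow, Nat.div_self (Nat.pow_pos (n := j) (by norm_num))]
    norm_num
    exact Odd.neg_one_pow ⟨k, hk⟩
  have hkron2 : kron 3 (7 * 2 ^ j) = 1 := by
    unfold kron
    have hval : padicValNat 2 (7 * 2 ^ j) = j := by
      rw [padicValNat.mul (by norm_num) (by positivity),
        padicValNat.eq_zero_of_not_dvd (by norm_num), padicValNat.prime_pow, zero_add]
    rw [hval, Nat.mul_div_assoc 7 dvd_rfl, Nat.div_self (Nat.pow_pos (n := j) (by norm_num)),
      mul_one]
    norm_num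
    rw [Odd.neg_one_pow ⟨k, hk⟩]
    norm_num
  refine ⟨A, B, by linarith, by linarith, hA.symm, hB.symm, ?_, ?_, ?_, hkron1, hkron2, ?_⟩
  · -- A ≡ B mod 2^(j+1): B - A = 2^(j+1)
    have hBA : B = A + 2 ^ (j + 1) := by rw [hBdef, pow_succ]; ring
    rw [hBA]
    simp [Int.ModEq]
  · -- continued fraction value for A
    have hAq : (3 : ℚ) * A = 2 ^ j - 2 := by
      have h := hA
      have h2 : ((2 ^ j - 2 : ℤ) : ℚ) = ((3 * A : ℤ) : ℚ) := by rw [h]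
      push_cast at h2; linarith
    have hpos : (0 : ℚ) < 2 ^ j := by positivity
    have hA3 : (A : ℚ) + 1 / (1 + 1 / 2) = 2 ^ j / 3 := by
      have h23 : (1:ℚ) / (1 + 1/2) = 2/3 := by norm_num
      rw [h23, eq_div_iff (by norm_num : (3:ℚ) ≠ 0)]
      linarith
    rw [zero_add, hA3, one_div_div]
  · -- continued fraction value for B
    have hBq : (3 : ℚ) * B = 7 * 2 ^ j - 2 := by
      have h2 : ((7 * 2 ^ j - 2 : ℤ) : ℚ) = ((3 * B : ℤ) : ℚ) := by rw [hB]
      push_cast at h2; linarith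
    have hB3' : (B : ℚ) + 1 / (1 + 1 / 2) = 7 * 2 ^ j / 3 := by
      have h23 : (1:ℚ) / (1 + 1/2) = 2/3 := by norm_num
      rw [h23, eq_div_iff (by norm_num : (3:ℚ) ≠ 0)]
      linarith
    rw [zero_add, hB3', one_div_div]
  · rw [hkron1, hkron2]; norm_num
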